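/- Fix b = −3/16 (so γ = 1 + (16/3)b = 0), let ω > 0 and −2√ω < c < 0. Then the momentum of the soliton satisfies P(φ_{ω,c}) = −((2ω + c²)/(3c))·M(φ_{ω,c}), where M(φ_{ω,c}) = ∫_ℝ Φ_{ω,c}² and P(φ_{ω,c}) = Re ∫_ℝ i φ_{ω,c}'(x)·conj(φ_{ω,c}(x)) dx. -/

import Mathlib

open MeasureTheory Real Set Filter Topology

/-- The soliton profile of the derivative NLS after gauge transformation:
the algebraic profile when `c = 2√ω`, the bright profile when `-2√ω < c < 2√ω`. -/
noncomputable def Phi (γ ω c x : ℝ) : ℝ :=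
  if c = 2 * Real.sqrt ω then
    Real.sqrt (4 * c / ((c * x) ^ 2 + γ))
  else
    Real.sqrt (2 * (4 * ω - c ^ 2) /
      (Real.sqrt (c ^ 2 + γ * (4 * ω - c ^ 2)) * Real.cosh (Real.sqrt (4 * ω - c ^ 2) * x) - c))

/-- The complex soliton profile
`φ_{ω,c}(x) = exp(i((c/2)x - (1/4)∫_{-∞}^x Φ²)) Φ(x)`. -/
noncomputable def solp (γ ω c x : ℝ) : ℂ :=
  Complex.exp (Complex.I *
      Complex.ofReal (c / 2 * x - 1 / 4 * ∫ y in Iic x, (Phi γ ω c y) ^ 2)) *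
    Complex.ofReal (Phi γ ω c x)

/-- The mass `M(φ_{ω,c}) = ∫_ℝ Φ_{ω,c}²`. -/
noncomputable def solMass (γ ω c : ℝ) : ℝ := ∫ x : ℝ, (Phi γ ω c x) ^ 2

/-- The momentum `P(φ_{ω,c}) = Re ∫_ℝ i φ' conj(φ)`. -/
noncomputable def solMom (γ ω c : ℝ) : ℝ :=
  (∫ x : ℝ, Complex.I * deriv (fun y => solp γ ω c y) x *
    (starRingEnd ℂ) (solp γ ω c x)).re

section helpers

lemma tanh_aux (x : ℝ) : Real.sinh x / Real.cosh x
    = (1 - Real.exp (-2*x)) / (1 + Real.exp (-2*x)) := by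
  have he : Real.exp x ≠ 0 := (Real.exp_pos x).ne'
  have h2 : Real.exp (-2*x) = ((Real.exp x)⁻¹)^2 := by
    rw [show (-2:ℝ)*x = (-x) + (-x) by ring, Real.exp_add, Real.exp_neg]; ring
  rw [Real.sinh_eq, Real.cosh_eq, Real.exp_neg, h2]
  have hc : (Real.exp x + (Real.exp x)⁻¹) ≠ 0 := by positivity
  have hd : (1 + ((Real.exp x)⁻¹)^2) ≠ 0 := by positivity
  field_simp

lemma tendsto_tanh_top : Tendsto (fun x => Real.sinh x / Real.cosh x) atTop (𝓝 1) := by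
  have h0 : Tendsto (fun x : ℝ => Real.exp (-2*x)) atTop (𝓝 0) := by
    apply Real.tendsto_exp_atBot.comp
    exact tendsto_id.const_mul_atTop_of_neg (by norm_num)
  have hnum : Tendsto (fun x : ℝ => 1 - Real.exp (-2*x)) atTop (𝓝 1) := by
    simpa using tendsto_const_nhds.sub h0
  have hden : Tendsto (fun x : ℝ => 1 + Real.exp (-2*x)) atTop (𝓝 1) := by
    simpa using tendsto_const_nhds.add h0
  have := hnum.div hden one_ne_zero
  rw [div_one] at this
  exact this.congr fun x => (tanh_aux x).symm

/-- derivative of `sinh(ax)/cosh(ax)` -/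
lemma hasDerivAt_T (a x : ℝ) :
    HasDerivAt (fun y => Real.sinh (a*y) / Real.cosh (a*y))
      (a * ((Real.cosh (a*x))⁻¹)^2) x := by
  have hax : HasDerivAt (fun y : ℝ => a*y) a x := by
    simpa using (hasDerivAt_id x).const_mul a
  have hs : HasDerivAt (fun y => Real.sinh (a*y)) (Real.cosh (a*x) * a) x :=
    (Real.hasDerivAt_sinh (a*x)).comp x hax
  have hco : HasDerivAt (fun y => Real.cosh (a*y)) (Real.sinh (a*x) * a) x :=
    (Real.hasDerivAt_cosh (a*x)).comp x hax
  have hcne : Real.cosh (a*x) ≠ 0 := (Real.cosh_pos _).ne'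
  have := hs.div hco hcne
  refine this.congr_deriv (Eq.symm ?_)
  have hid : Real.cosh (a*x)^2 - Real.sinh (a*x)^2 = 1 := Real.cosh_sq_sub_sinh_sq (a*x)
  field_simp
  linear_combination (-a) * hid

lemma hasDerivAt_G2 (a x : ℝ) (ha : a ≠ 0) :
    HasDerivAt (fun y => Real.sinh (a*y)/Real.cosh (a*y)/a)
      (((Real.cosh (a*x))⁻¹)^2) x := by
  have := (hasDerivAt_T a x).div_const a
  refine this.congr_deriv (Eq.symm ?_)
  field_simp

lemma tendsto_G2_top (a : ℝ) (ha : 0 < a) :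
    Tendsto (fun x => Real.sinh (a*x)/Real.cosh (a*x)/a) atTop (𝓝 (1/a)) := by
  have h1 : Tendsto (fun x : ℝ => a*x) atTop atTop := tendsto_id.const_mul_atTop ha
  exact (tendsto_tanh_top.comp h1).div_const a

lemma tendsto_G2_bot (a : ℝ) (ha : 0 < a) :
    Tendsto (fun x => Real.sinh (a*x)/Real.cosh (a*x)/a) atBot (𝓝 (-(1/a))) := by
  have := (tendsto_G2_top a ha).neg.comp tendsto_neg_atBot_atTop
  refine this.congr fun x => ?_
  simp [mul_neg, Real.sinh_neg, Real.cosh_neg, neg_div]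

lemma integrable_even {f : ℝ → ℝ} (heven : ∀ x, f (-x) = f x)
    (hIoi : IntegrableOn f (Ioi 0)) : Integrable f := by
  have hIic : IntegrableOn f (Iic 0) := by
    rw [show (volume : Measure ℝ) = Measure.map Neg.neg volume from
      (Measure.map_neg_eq_self (volume : Measure ℝ)).symm]
    have m : MeasurableEmbedding (Neg.neg : ℝ → ℝ) :=
      (Homeomorph.neg ℝ).measurableEmbedding
    rw [m.integrableOn_map_iff]
    have : (f ∘ Neg.neg) = f := funext fun x => heven x
    rw [this, show (Neg.neg : ℝ → ℝ) ⁻¹' (Iic 0) = Ici 0 by ext y; simp]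
    exact (integrableOn_Ici_iff_integrableOn_Ioi).mpr hIoi
  have := hIic.union hIoi
  rwa [Iic_union_Ioi, integrableOn_univ] at this

lemma sech_sq_integrable (a : ℝ) (ha : 0 < a) :
    Integrable (fun x => ((Real.cosh (a*x))⁻¹)^2) := by
  apply integrable_even (by intro x; rw [mul_neg, Real.cosh_neg])
  exact integrableOn_Ioi_deriv_of_nonneg' (fun x _ => hasDerivAt_G2 a x ha.ne')
    (fun x _ => by positivity) (tendsto_G2_top a ha)

lemma sech_sq_integral (a : ℝ) (ha : 0 < a) :
    ∫ x : ℝ, ((Real.cosh (a*x))⁻¹)^2 = 2/a := by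
  rw [MeasureTheory.integral_of_hasDerivAt_of_tendsto
    (fun x => hasDerivAt_G2 a x ha.ne') (sech_sq_integrable a ha)
    (tendsto_G2_bot a ha) (tendsto_G2_top a ha)]
  ring

lemma hasDerivAt_G4 (a x : ℝ) (ha : a ≠ 0) :
    HasDerivAt (fun y => (Real.sinh (a*y)/Real.cosh (a*y)
        - (Real.sinh (a*y)/Real.cosh (a*y))^3 / 3)/a)
      (((Real.cosh (a*x))⁻¹)^4) x := by
  have hT := hasDerivAt_T a x
  have := ((hT.sub ((hT.pow 3).div_const 3)).div_const a)
  refine this.congr_deriv (Eq.symm ?_)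
  have hcne : Real.cosh (a*x) ≠ 0 := (Real.cosh_pos _).ne'
  have hid : Real.cosh (a*x)^2 - Real.sinh (a*x)^2 = 1 := Real.cosh_sq_sub_sinh_sq (a*x)
  have hs2 : Real.sinh (a*x)^2 = Real.cosh (a*x)^2 - 1 := by linarith
  simp only [Nat.cast_ofNat, show (3-1:ℕ) = 2 from rfl, div_pow, hs2]
  field_simp
  ring

lemma tendsto_G4_top (a : ℝ) (ha : 0 < a) :
    Tendsto (fun x => (Real.sinh (a*x)/Real.cosh (a*x)
        - (Real.sinh (a*x)/Real.cosh (a*x))^3 / 3)/a) atTop (𝓝 (2/(3*a))) := by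
  have h1 : Tendsto (fun x : ℝ => a*x) atTop atTop := tendsto_id.const_mul_atTop ha
  have hT := tendsto_tanh_top.comp h1
  have := ((hT.sub ((hT.pow 3).div_const 3)).div_const a)
  convert this using 2
  · simp only [Function.comp_apply]
  · ring

lemma tendsto_G4_bot (a : ℝ) (ha : 0 < a) :
    Tendsto (fun x => (Real.sinh (a*x)/Real.cosh (a*x)
        - (Real.sinh (a*x)/Real.cosh (a*x))^3 / 3)/a) atBot (𝓝 (-(2/(3*a)))) := by
  have := (tendsto_G4_top a ha).neg.comp tendsto_neg_atBot_atTop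
  refine this.congr fun x => ?_
  simp only [Function.comp_apply, mul_neg, Real.sinh_neg, Real.cosh_neg]
  ring

lemma sech_four_integrable (a : ℝ) (ha : 0 < a) :
    Integrable (fun x => ((Real.cosh (a*x))⁻¹)^4) := by
  apply integrable_even (by intro x; rw [mul_neg, Real.cosh_neg])
  exact integrableOn_Ioi_deriv_of_nonneg' (fun x _ => hasDerivAt_G4 a x ha.ne')
    (fun x _ => by positivity) (tendsto_G4_top a ha)

lemma sech_four_integral (a : ℝ) (ha : 0 < a) :
    ∫ x : ℝ, ((Real.cosh (a*x))⁻¹)^4 = 4/(3*a) := by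
  rw [MeasureTheory.integral_of_hasDerivAt_of_tendsto
    (fun x => hasDerivAt_G4 a x ha.ne') (sech_four_integrable a ha)
    (tendsto_G4_bot a ha) (tendsto_G4_top a ha)]
  ring

lemma phi_eq {ω c : ℝ} (hω : 0 < ω) (hc : -2 * Real.sqrt ω < c) (hc0 : c < 0) (x : ℝ) :
    Phi 0 ω c x = Real.sqrt (Real.sqrt (4*ω - c^2) ^ 2 / (-c)) *
      (Real.cosh (Real.sqrt (4*ω - c^2) / 2 * x))⁻¹ := by
  set k := Real.sqrt (4*ω - c^2) with hkdef
  have hsw : 0 < Real.sqrt ω := Real.sqrt_pos.mpr hω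
  have hc2 : c^2 < 4*ω := by nlinarith [Real.sq_sqrt hω.le]
  have hk2 : k^2 = 4*ω - c^2 := Real.sq_sqrt (by linarith)
  have hne : c ≠ 2*Real.sqrt ω := ne_of_lt (lt_trans hc0 (by positivity))
  have hcpos : 0 < Real.cosh (k/2*x) := Real.cosh_pos _
  rw [Phi, if_neg hne]
  simp only [zero_mul, add_zero]
  rw [Real.sqrt_sq_eq_abs, abs_of_nonpos hc0.le]
  have hch : Real.cosh (k*x) = 2 * Real.cosh (k/2*x)^2 - 1 := by
    rw [show k*x = 2*(k/2*x) by ring, Real.cosh_two_mul, Real.sinh_sq]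
    ring
  have e1 : 2*(4*ω - c^2) / (-c * Real.cosh (k*x) - c)
      = k^2/(-c) * ((Real.cosh (k/2*x))⁻¹)^2 := by
    rw [hch, ← hk2]
    field_simp
    ring
  rw [e1, Real.sqrt_mul (div_nonneg (sq_nonneg k) (by linarith)),
    Real.sqrt_sq (inv_nonneg.mpr hcpos.le)]


lemma key_alg (t φ d θ' : ℝ) :
    Complex.I * (Complex.exp (Complex.I * (t : ℂ)) *
        (Complex.I * (θ' : ℂ) * (φ : ℂ) + (d : ℂ))) *
      (starRingEnd ℂ) (Complex.exp (Complex.I * (t : ℂ)) * (φ : ℂ))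
    = ((-θ' * φ^2 : ℝ) : ℂ) + ((d * φ : ℝ) : ℂ) * Complex.I := by
  have hE : Complex.exp (Complex.I * (t : ℂ)) *
      (starRingEnd ℂ) (Complex.exp (Complex.I * (t : ℂ))) = 1 := by
    rw [← Complex.exp_conj, map_mul, Complex.conj_I, Complex.conj_ofReal,
      ← Complex.exp_add, show Complex.I * (t:ℂ) + -Complex.I * (t:ℂ) = 0 by ring,
      Complex.exp_zero]
  rw [map_mul, Complex.conj_ofReal]
  push_cast
  linear_combination (Complex.I * (Complex.I*(θ':ℂ)*(φ:ℂ) + (d:ℂ)) * (φ:ℂ)) * hE + ((θ':ℂ) * (φ:ℂ)^2) * Complex.I_sq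

end helpers

/-- Momentum formula for the solitons in the case `b = -3/16`, i.e. `γ = 0`:
`P(φ_{ω,c}) = -((2ω + c²)/(3c)) M(φ_{ω,c})` for `-2√ω < c < 0`. -/
theorem stmt_9 (b γ ω c : ℝ) (hb : b = -3 / 16) (hγ : γ = 1 + 16 / 3 * b)
    (hω : 0 < ω) (hc : -2 * Real.sqrt ω < c) (hc0 : c < 0) :
    solMom γ ω c = -((2 * ω + c ^ 2) / (3 * c)) * solMass γ ω c := by
  have hγ0 : γ = 0 := by rw [hγ, hb]; norm_num
  subst hγ0
  have hsw : 0 < Real.sqrt ω := Real.sqrt_pos.mpr hω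
  have hc2 : c^2 < 4*ω := by nlinarith [Real.sq_sqrt hω.le]
  set k := Real.sqrt (4*ω - c^2) with hkdef
  have hk2 : k^2 = 4*ω - c^2 := Real.sq_sqrt (by linarith)
  have hk : 0 < k := Real.sqrt_pos.mpr (by linarith)
  set a := k/2 with hadef
  have ha : 0 < a := by positivity
  set A := k^2 / (-c) with hAdef
  have hA : 0 < A := div_pos (by positivity) (by linarith)
  have hsA : Real.sqrt A ^ 2 = A := Real.sq_sqrt hA.le
  have hPhi : ∀ x, Phi 0 ω c x = Real.sqrt A * (Real.cosh (a*x))⁻¹ := fun x => phi_eq hω hc hc0 x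
  have hQ : ∀ x, Phi 0 ω c x ^ 2 = A * ((Real.cosh (a*x))⁻¹)^2 := by
    intro x; rw [hPhi x, mul_pow, hsA]
  have hcoshne : ∀ x : ℝ, Real.cosh (a*x) ≠ 0 := fun x => (Real.cosh_pos _).ne'
  have hsechc : Continuous fun x : ℝ => ((Real.cosh (a*x))⁻¹ : ℝ) :=
    (Real.continuous_cosh.comp (continuous_const.mul continuous_id)).inv₀ hcoshne
  have hQc : Continuous fun x => Phi 0 ω c x ^ 2 := by
    rw [show (fun x => Phi 0 ω c x ^2) = fun x => A * ((Real.cosh (a*x))⁻¹)^2 from funext hQ]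
    exact continuous_const.mul (hsechc.pow 2)
  have hQint : Integrable fun x => Phi 0 ω c x ^ 2 := by
    simp only [hQ]
    exact (sech_sq_integrable a ha).const_mul A
  have hQ2int : Integrable fun x => (Phi 0 ω c x ^ 2)^2 := by
    simp only [hQ]
    rw [show (fun x => (A*((Real.cosh (a*x))⁻¹)^2)^2)
      = fun x => A^2 * ((Real.cosh (a*x))⁻¹)^4 from funext fun x => by ring]
    exact (sech_four_integrable a ha).const_mul (A^2)
  have hM2 : ∫ x : ℝ, Phi 0 ω c x ^2 = A * (2/a) := by
    simp only [hQ]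
    rw [MeasureTheory.integral_const_mul, sech_sq_integral a ha]
  have hM4 : ∫ x : ℝ, (Phi 0 ω c x ^2)^2 = A^2 * (4/(3*a)) := by
    simp only [hQ]
    rw [show (fun x => (A*((Real.cosh (a*x))⁻¹)^2)^2)
      = fun x => A^2 * ((Real.cosh (a*x))⁻¹)^4 from funext fun x => by ring]
    rw [MeasureTheory.integral_const_mul, sech_four_integral a ha]
  -- derivative of the phase
  have hθder : ∀ x : ℝ, HasDerivAt (fun t => c / 2 * t - 1 / 4 * ∫ y in Iic t, Phi 0 ω c y ^ 2)
      (c/2 - Phi 0 ω c x ^2/4) x := by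
    intro x
    have hHder : HasDerivAt (fun t => ∫ y in Iic t, Phi 0 ω c y ^2) (Phi 0 ω c x ^2) x := by
      rw [show (fun t => ∫ y in Iic t, Phi 0 ω c y ^2)
          = fun t => (∫ y in Iic (0:ℝ), Phi 0 ω c y ^2) + ∫ y in (0:ℝ)..t, Phi 0 ω c y ^2 from
        funext fun t => by
          rw [← intervalIntegral.integral_Iic_sub_Iic hQint.integrableOn hQint.integrableOn]
          ring]
      exact (intervalIntegral.integral_hasDerivAt_right (hQint.intervalIntegrable)
        hQc.stronglyMeasurable.stronglyMeasurableAtFilter hQc.continuousAt).const_add _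
    have h1 : HasDerivAt (fun t : ℝ => c/2*t) (c/2) x := by
      simpa using (hasDerivAt_id x).const_mul (c/2)
    have := h1.sub (hHder.const_mul (1/4))
    refine this.congr_deriv (Eq.symm ?_)
    ring
  -- derivative of the profile
  set D := fun x : ℝ => Real.sqrt A * (-(Real.sinh (a*x) * a) / Real.cosh (a*x) ^ 2) with hDdef
  have hPhider : ∀ x, HasDerivAt (fun t => Phi 0 ω c t) (D x) x := by
    intro x
    have hax : HasDerivAt (fun y : ℝ => a*y) a x := by simpa using (hasDerivAt_id x).const_mul a
    have hco : HasDerivAt (fun y => Real.cosh (a*y)) (Real.sinh (a*x) * a) x :=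
      (Real.hasDerivAt_cosh (a*x)).comp x hax
    have hinv := (hco.inv (hcoshne x)).const_mul (Real.sqrt A)
    rw [show (fun t => Phi 0 ω c t) = fun t => Real.sqrt A * (Real.cosh (a*t))⁻¹ from
      funext hPhi]
    exact hinv
  -- derivative of the soliton
  have hsolp : ∀ x : ℝ, HasDerivAt (fun y => solp 0 ω c y)
      (Complex.exp (Complex.I * ((c / 2 * x - 1 / 4 * ∫ y in Iic x, Phi 0 ω c y ^ 2 : ℝ) : ℂ)) *
        (Complex.I * ((c/2 - Phi 0 ω c x^2/4 : ℝ) : ℂ) * ((Phi 0 ω c x : ℝ) : ℂ)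
          + ((D x : ℝ) : ℂ))) x := by
    intro x
    have hθC := (hθder x).ofReal_comp
    have hexp := (hθC.const_mul Complex.I).cexp
    have hΦC := (hPhider x).ofReal_comp
    have hmul := hexp.mul hΦC
    simp only [solp]
    refine hmul.congr_deriv (Eq.symm ?_)
    ring
  -- pointwise formula for the integrand
  set R := fun x : ℝ => -(c/2 - Phi 0 ω c x ^2/4) * Phi 0 ω c x ^2 with hRdef
  set J := fun x : ℝ => D x * Phi 0 ω c x with hJdef
  have hint_eq : ∀ x : ℝ, Complex.I * deriv (fun y => solp 0 ω c y) x *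
      (starRingEnd ℂ) (solp 0 ω c x) = ((R x : ℝ) : ℂ) + ((J x : ℝ) : ℂ) * Complex.I := by
    intro x
    rw [(hsolp x).deriv]
    simp only [solp, hRdef, hJdef]
    exact key_alg _ _ _ _
  -- integrability of the pieces
  have hRint : Integrable R := by
    rw [show R = fun x => (-(c/2))*(Phi 0 ω c x ^2) + (1/4)*((Phi 0 ω c x ^2)^2) from
      funext fun x => by rw [hRdef]; ring]
    exact (hQint.const_mul _).add (hQ2int.const_mul _)
  have hJint : Integrable J := by
    refine Integrable.mono' (((sech_sq_integrable a ha).const_mul (A*a))) ?_ ?_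
    · refine Continuous.aestronglyMeasurable ?_
      rw [hJdef, hDdef]
      refine Continuous.mul (continuous_const.mul ?_) ?_
      · exact ((Real.continuous_sinh.comp (continuous_const.mul continuous_id)).mul
          continuous_const).neg.div
          ((Real.continuous_cosh.comp (continuous_const.mul continuous_id)).pow 2)
          (fun x => pow_ne_zero _ (hcoshne x))
      · exact (continuous_const.mul hsechc).congr fun x => (hPhi x).symm
    · refine Filter.Eventually.of_forall fun x => ?_
      have hC := Real.cosh_pos (a*x)
      have hS : |Real.sinh (a*x)| ≤ Real.cosh (a*x) := by
        have hid := Real.cosh_sq_sub_sinh_sq (a*x)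
        nlinarith [sq_abs (Real.sinh (a*x)), abs_nonneg (Real.sinh (a*x))]
      have hrt : Real.sqrt A * Real.sqrt A = A := Real.mul_self_sqrt hA.le
      have hJval : J x = -(A*a) * (Real.sinh (a*x)/Real.cosh (a*x)^3) := by
        simp only [hJdef, hDdef]
        rw [hPhi x, show Real.sqrt A * (-(Real.sinh (a*x) * a) / Real.cosh (a*x) ^ 2) *
            (Real.sqrt A * (Real.cosh (a*x))⁻¹)
          = (Real.sqrt A * Real.sqrt A) * (-(Real.sinh (a*x) * a) / Real.cosh (a*x) ^ 2 *
            (Real.cosh (a*x))⁻¹) from by ring, hrt]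
        field_simp
      rw [hJval]
      rw [Real.norm_eq_abs, abs_mul, abs_neg, abs_of_pos (by positivity : (0:ℝ) < A*a),
        abs_div, abs_of_pos (by positivity : (0:ℝ) < Real.cosh (a*x)^3)]
      rw [show A*a*((Real.cosh (a*x))⁻¹)^2 = A*a*(Real.cosh (a*x)/Real.cosh (a*x)^3) by
        field_simp]
      gcongr
  -- the momentum as a real integral
  have hmom : solMom 0 ω c = ∫ x : ℝ, R x := by
    rw [solMom]
    rw [show (fun x : ℝ => Complex.I * deriv (fun y => solp 0 ω c y) x *
        (starRingEnd ℂ) (solp 0 ω c x)) = fun x => ((R x : ℝ) : ℂ) + ((J x : ℝ) : ℂ) * Complex.I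
      from funext hint_eq]
    have hRC : Integrable (fun x : ℝ => (Complex.ofReal (R x))) := hRint.ofReal
    have hJC : Integrable (fun x : ℝ => (Complex.ofReal (J x)) * Complex.I) :=
      hJint.ofReal.mul_const _
    rw [integral_add hRC hJC, integral_mul_const,
      show (∫ x : ℝ, Complex.ofReal (R x)) = Complex.ofReal (∫ x : ℝ, R x) from integral_ofReal,
      show (∫ x : ℝ, Complex.ofReal (J x)) = Complex.ofReal (∫ x : ℝ, J x) from integral_ofReal]
    simp
  have hRval : ∫ x : ℝ, R x = (-(c/2))*(A*(2/a)) + (1/4)*(A^2*(4/(3*a))) := by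
    rw [show R = fun x => (-(c/2))*(Phi 0 ω c x ^2) + (1/4)*((Phi 0 ω c x ^2)^2) from
      funext fun x => by rw [hRdef]; ring]
    rw [integral_add (hQint.const_mul _) (hQ2int.const_mul _),
      MeasureTheory.integral_const_mul, MeasureTheory.integral_const_mul, hM2, hM4]
  have hmass : solMass 0 ω c = A * (2/a) := by rw [solMass, hM2]
  rw [hmom, hRval, hmass, hAdef, hadef]
  have hcne : c ≠ 0 := hc0.ne
  have hω4 : ω = (k^2+c^2)/4 := by linarith
  rw [hω4]
  field_simp
  ring
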